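/- arXiv:2311.17312 — 3 statements merged into one kernel-verified Lean document; each statement's English description precedes it below -/
import Mathlib

section
/- Let a = (a_1, …, a_m) be a strictly decreasing partition with m ≥ 2 and a_m = 1, let ε ∈ {0,1}^m with ε_m = 1, and let k ≥ 1. Then g(a, ε, k) = g(a', ε', k−1), where a' = (a_1 − 1, a_2 − 1, …, a_{m−1} − 1) and ε' = (ε_1, …, ε_{m−1}); moreover g(a, ε, 0) = 0. -/
namespace ChordExpansion

/-- The set of crossings of a chord diagram `E`, where a chord is an ordered pair `(u, v)`
with `u < v`, and a crossing is recorded as `((a, c), (b, d))` with `a < b < c < d`. -/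
def crossings (E : Finset (ℕ × ℕ)) : Finset ((ℕ × ℕ) × (ℕ × ℕ)) :=
  (E ×ˢ E).filter fun p => p.1.1 < p.2.1 ∧ p.2.1 < p.1.2 ∧ p.1.2 < p.2.2

/-- Encoding of a crossing as a natural number (used to pick a canonical crossing). -/
def encodeC (p : (ℕ × ℕ) × (ℕ × ℕ)) : ℕ :=
  Nat.pair (Nat.pair p.1.1 p.1.2) (Nat.pair p.2.1 p.2.2)

def decodeC (x : ℕ) : (ℕ × ℕ) × (ℕ × ℕ) :=
  ((x.unpair.1.unpair.1, x.unpair.1.unpair.2), (x.unpair.2.unpair.1, x.unpair.2.unpair.2))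

/-- The canonical (least, in a fixed encoding) crossing of `E`. -/
def canonCrossing (E : Finset (ℕ × ℕ)) : (ℕ × ℕ) × (ℕ × ℕ) :=
  decodeC (WithTop.untopD 0 ((crossings E).image encodeC).min)

/-- First result `E₁ = (E ∖ {ac, bd}) ∪ {ab, cd}` of expanding `E` at its canonical crossing. -/
def expand1 (E : Finset (ℕ × ℕ)) : Finset (ℕ × ℕ) :=
  (E \ {(canonCrossing E).1, (canonCrossing E).2}) ∪
    {((canonCrossing E).1.1, (canonCrossing E).2.1),
     ((canonCrossing E).1.2, (canonCrossing E).2.2)}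

/-- Second result `E₂ = (E ∖ {ac, bd}) ∪ {ad, bc}` of expanding `E` at its canonical crossing. -/
def expand2 (E : Finset (ℕ × ℕ)) : Finset (ℕ × ℕ) :=
  (E \ {(canonCrossing E).1, (canonCrossing E).2}) ∪
    {((canonCrossing E).1.1, (canonCrossing E).2.2),
     ((canonCrossing E).2.1, (canonCrossing E).1.2)}

/-- Fuel-based chord expansion number; since each expansion strictly decreases the number of
crossings, fuel `(crossings E).card` suffices. -/
def exAux : ℕ → Finset (ℕ × ℕ) → ℕ
  | 0, _ => 1
  | fuel + 1, E =>
    if crossings E = ∅ then 1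
    else exAux fuel (expand1 E) + exAux fuel (expand2 E)

/-- The chord expansion number `ex(E)`. -/
def exCD (E : Finset (ℕ × ℕ)) : ℕ := exAux (crossings E).card E

/-- Fuel-based chord expansion multiset. -/
def ncdAux : ℕ → Finset (ℕ × ℕ) → Multiset (Finset (ℕ × ℕ))
  | 0, E => {E}
  | fuel + 1, E =>
    if crossings E = ∅ then {E}
    else ncdAux fuel (expand1 E) + ncdAux fuel (expand2 E)

/-- The chord expansion multiset `𝒩𝒞𝒟(E)` of nonintersecting chord diagrams obtained by
iterated chord expansions. -/
def ncd (E : Finset (ℕ × ℕ)) : Multiset (Finset (ℕ × ℕ)) := ncdAux (crossings E).card E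

/-- The chord diagram `E(a, ε)`: rows indexed by `1..m`, with `n = a 1` columns.  The points
`x_1, …, x_m, z_1, …, z_n, y_n, …, y_1` in anticlockwise circular order are labelled
`x_i = i`, `z_j = m + j`, `y_j = m + 2n + 1 - j`. -/
def EDiag (m n : ℕ) (a ε : ℕ → ℕ) : Finset (ℕ × ℕ) :=
  ((Finset.Icc 1 m).filter fun i => ε i = 0).image (fun i => (i, m + 2 * n + 1 - a i)) ∪
  ((Finset.Icc 1 m).filter fun i => ε i = 1).image (fun i => (i, m + a i)) ∪
  ((Finset.Icc 1 n).filter fun j => j ∉ (Finset.Icc 1 m).image a).image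
    (fun j => (m + j, m + 2 * n + 1 - j))

/-- `e_F(U)`: the number of chords of `F` with both endpoints in `U`. -/
def eCh (F : Finset (ℕ × ℕ)) (U : Finset ℕ) : ℕ :=
  (F.filter fun c => c.1 ∈ U ∧ c.2 ∈ U).card

/-- `f(a, ε, k)`: the number of nonintersecting chord diagrams `F` in the chord expansion
multiset of `E(a, ε)` with `e_F(Y) + e_F(X ∪ Z) = k`, where `X ∪ Z` is labelled
`1..m+n` and `Y` is labelled `m+n+1..m+2n` (`n = a 1`). -/
def fCD (m : ℕ) (a ε : ℕ → ℕ) (k : ℕ) : ℕ :=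
  Multiset.countP
    (fun F =>
      eCh F (Finset.Icc (m + a 1 + 1) (m + 2 * a 1)) + eCh F (Finset.Icc 1 (m + a 1)) = k)
    (ncd (EDiag m (a 1) a ε))

/-- The boxes `(i, j)`, `1 ≤ i ≤ m`, `1 ≤ j ≤ a i`, of the Young diagram of shape `a`. -/
def boxes (m : ℕ) (a : ℕ → ℕ) : Finset (ℕ × ℕ) :=
  ((Finset.Icc 1 m) ×ˢ (Finset.Icc 1 (a 1))).filter fun p => p.2 ≤ a p.1

/-- `g(a, ε, k)`: the number of 0-1 Young diagrams of shape `a` (identified with the set `M`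
of boxes carrying a `1`) such that every column has at most one `1`, row `i` has a number of
`1`'s congruent to `ε i (mod 2)`, and there are exactly `k` `1`'s in total. -/
def gYD (m : ℕ) (a ε : ℕ → ℕ) (k : ℕ) : ℕ :=
  ((boxes m a).powerset.filter fun M =>
    (∀ j ∈ Finset.Icc 1 (a 1), (M.filter fun p => p.2 = j).card ≤ 1) ∧
    (∀ i ∈ Finset.Icc 1 m, (M.filter fun p => p.1 = i).card % 2 = ε i % 2) ∧
    M.card = k).card

/-- As `gYD`, but with no condition on the total number of `1`'s. -/
def gAll (m : ℕ) (a ε : ℕ → ℕ) : ℕ :=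
  ((boxes m a).powerset.filter fun M =>
    (∀ j ∈ Finset.Icc 1 (a 1), (M.filter fun p => p.2 = j).card ≤ 1) ∧
    (∀ i ∈ Finset.Icc 1 m, (M.filter fun p => p.1 = i).card % 2 = ε i % 2)).card


/-- **Case 1.2 of the proof of Theorem 1.** If `a m = 1` and `ε m = 1`, then for `k ≥ 1`,
`g(a, ε, k) = g(a', ε', k - 1)` where `a' = (a 1 - 1, …, a (m-1) - 1)` and
`ε' = (ε 1, …, ε (m-1))`; moreover `g(a, ε, 0) = 0`. -/
theorem g_lastRow_one (m : ℕ) (hm : 2 ≤ m) (a ε : ℕ → ℕ)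
    (ha : ∀ i, 1 ≤ i → i + 1 ≤ m → a (i + 1) < a i) (ham : a m = 1)
    (hε : ∀ i ∈ Finset.Icc 1 m, ε i = 0 ∨ ε i = 1) (hεm : ε m = 1) (k : ℕ) (hk : 1 ≤ k) :
    gYD m a ε k = gYD (m - 1) (fun i => a i - 1) ε (k - 1) ∧ gYD m a ε 0 = 0 := by
  have amono : ∀ j, ∀ i, 1 ≤ i → i ≤ j → j ≤ m → a j ≤ a i := by
    intro j
    induction j with
    | zero => intro i h1 h2 _; omega
    | succ n ih =>
      intro i h1 h2 h3
      rcases eq_or_lt_of_le h2 with h | h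
      · rw [h]
      · have h4 : a (n + 1) < a n := ha n (by omega) h3
        have h5 := ih i h1 (by omega) (by omega)
        omega
  have a1pos : 1 ≤ a 1 := by
    have := amono m 1 le_rfl (by omega) le_rfl; omega
  have abig : ∀ i, 1 ≤ i → i < m → 2 ≤ a i := by
    intro i h1 h2
    have h3 := amono m (i + 1) (by omega) (by omega) le_rfl
    have h4 := ha i h1 (by omega)
    omega
  have memboxes : ∀ (m' : ℕ) (a' : ℕ → ℕ) (p : ℕ × ℕ), p ∈ boxes m' a' ↔
      (1 ≤ p.1 ∧ p.1 ≤ m' ∧ 1 ≤ p.2 ∧ p.2 ≤ a' 1 ∧ p.2 ≤ a' p.1) := by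
    intro m' a' p
    simp [boxes, Finset.mem_filter, Finset.mem_product, Finset.mem_Icc]
    tauto
  -- corner facts: (m,1) ∈ M and all other boxes are strictly above-left
  have corner : ∀ M : Finset (ℕ × ℕ), M ⊆ boxes m a →
      (∀ j ∈ Finset.Icc 1 (a 1), (M.filter fun p => p.2 = j).card ≤ 1) →
      (∀ i ∈ Finset.Icc 1 m, (M.filter fun p => p.1 = i).card % 2 = ε i % 2) →
      (m, 1) ∈ M ∧ ∀ p ∈ M, p ≠ (m, 1) → 2 ≤ p.2 ∧ p.1 < m := by
    intro M hsub hcol hrow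
    have hfm : M.filter (fun p => p.1 = m) ⊆ {(m, 1)} := by
      intro p hp
      rw [Finset.mem_filter] at hp
      have hb := (memboxes m a p).1 (hsub hp.1)
      have hpe : p = (m, 1) := by
        obtain ⟨p1, p2⟩ := p
        have h2 : p1 = m := hp.2
        have hb' : 1 ≤ p1 ∧ p1 ≤ m ∧ 1 ≤ p2 ∧ p2 ≤ a 1 ∧ p2 ≤ a p1 := hb
        subst h2
        simp only [Prod.mk.injEq, true_and]
        omega
      simp [hpe]
    have hc : (M.filter (fun p => p.1 = m)).card = 1 := by
      have h1 := Finset.card_le_card hfm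
      simp only [Finset.card_singleton] at h1
      have h2 := hrow m (by simp [Finset.mem_Icc]; omega)
      rw [hεm] at h2
      omega
    have hmem : (m, 1) ∈ M := by
      obtain ⟨p, hp⟩ := Finset.card_pos.mp (by omega : 0 < (M.filter (fun p => p.1 = m)).card)
      have hps := hfm hp
      rw [Finset.mem_singleton] at hps
      rw [hps] at hp
      exact (Finset.mem_filter.mp hp).1
    refine ⟨hmem, ?_⟩
    intro p hp hne
    have hb := (memboxes m a p).1 (hsub hp)
    have h1m : p.1 < m := by
      rcases Nat.lt_or_ge p.1 m with h | h
      · exact h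
      · exfalso
        have hf : p ∈ M.filter (fun q => q.1 = m) := Finset.mem_filter.mpr ⟨hp, by omega⟩
        have := hfm hf
        rw [Finset.mem_singleton] at this
        exact hne this
    refine ⟨?_, h1m⟩
    by_contra h
    have hp2 : p.2 = 1 := by omega
    have hsub2 : ({p, (m, 1)} : Finset (ℕ × ℕ)) ⊆ M.filter (fun q => q.2 = 1) := by
      intro q hq
      rw [Finset.mem_insert, Finset.mem_singleton] at hq
      rcases hq with h' | h' <;> subst h'
      · exact Finset.mem_filter.mpr ⟨hp, hp2⟩
      · exact Finset.mem_filter.mpr ⟨hmem, rfl⟩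
    have hcard2 : ({p, (m, 1)} : Finset (ℕ × ℕ)).card = 2 := by
      rw [Finset.card_insert_of_notMem (by simp [hne]), Finset.card_singleton]
    have hle := Finset.card_le_card hsub2
    have := hcol 1 (by simp [Finset.mem_Icc]; omega)
    omega
  constructor
  · -- main bijection
    unfold gYD
    apply Finset.card_nbij' (fun M => (M.erase (m, 1)).image (fun p => (p.1, p.2 - 1)))
      (fun M' => insert ((m : ℕ), (1 : ℕ)) (M'.image (fun p => (p.1, p.2 + 1))))
    · -- forward membership
      intro M hM
      simp only [Finset.mem_coe, Finset.mem_filter, Finset.mem_powerset] at hM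
      obtain ⟨hsub, hcol, hrow, hcard⟩ := hM
      obtain ⟨hm1, hrest⟩ := corner M hsub hcol hrow
      have hkey : ∀ p ∈ M.erase (m, 1), 2 ≤ p.2 ∧ p.1 < m := by
        intro p hp
        rw [Finset.mem_erase] at hp
        exact hrest p hp.2 hp.1
      have hinj : Set.InjOn (fun p : ℕ × ℕ => (p.1, p.2 - 1)) (M.erase (m, 1)) := by
        intro p hp q hq hpq
        have h1 := hkey p (by exact_mod_cast hp)
        have h2 := hkey q (by exact_mod_cast hq)
        simp only [Prod.mk.injEq] at hpq
        obtain ⟨p1, p2⟩ := p; obtain ⟨q1, q2⟩ := q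
        simp only [Prod.mk.injEq, true_and]
        simp only at hpq h1 h2
        omega
      simp only [Finset.mem_coe, Finset.mem_filter, Finset.mem_powerset]
      refine ⟨?_, ?_, ?_, ?_⟩
      · -- subset of boxes
        intro q hq
        rw [Finset.mem_image] at hq
        obtain ⟨p, hp, rfl⟩ := hq
        have h1 := hkey p hp
        rw [Finset.mem_erase] at hp
        have hb := (memboxes m a p).1 (hsub hp.2)
        rw [memboxes]
        show 1 ≤ p.1 ∧ p.1 ≤ m - 1 ∧ 1 ≤ p.2 - 1 ∧ p.2 - 1 ≤ a 1 - 1 ∧ p.2 - 1 ≤ a p.1 - 1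
        have h2 : 2 ≤ a p.1 := abig p.1 hb.1 h1.2
        omega
      · -- columns
        intro j hj
        have hj' : 1 ≤ j ∧ j ≤ a 1 - 1 := Finset.mem_Icc.mp hj
        rw [Finset.filter_image]
        rw [Finset.card_image_of_injOn (hinj.mono (by
          intro x hx; exact (Finset.mem_coe.mpr (Finset.mem_filter.mp hx).1)))]
        have hss : (M.erase (m, 1)).filter (fun p : ℕ × ℕ => (p.1, p.2 - 1).2 = j) ⊆
            M.filter (fun p => p.2 = j + 1) := by
          intro p hp
          rw [Finset.mem_filter] at hp ⊢
          have h1 := hkey p hp.1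
          rw [Finset.mem_erase] at hp
          have h2 : p.2 - 1 = j := hp.2
          exact ⟨hp.1.2, by omega⟩
        have h3 := Finset.card_le_card hss
        have h4 := hcol (j + 1) (by rw [Finset.mem_Icc]; omega)
        omega
      · -- rows
        intro i hi
        rw [Finset.mem_Icc] at hi
        rw [Finset.filter_image]
        rw [Finset.card_image_of_injOn (hinj.mono (by
          intro x hx; exact (Finset.mem_coe.mpr (Finset.mem_filter.mp hx).1)))]
        have heq : (M.erase (m, 1)).filter (fun p : ℕ × ℕ => (p.1, p.2 - 1).1 = i) =
            M.filter (fun p => p.1 = i) := by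
          ext p
          rw [Finset.mem_filter, Finset.mem_filter, Finset.mem_erase]
          show (p ≠ (m, 1) ∧ p ∈ M) ∧ p.1 = i ↔ p ∈ M ∧ p.1 = i
          constructor
          · rintro ⟨⟨_, h1⟩, h2⟩; exact ⟨h1, h2⟩
          · rintro ⟨h1, h2⟩
            refine ⟨⟨?_, h1⟩, h2⟩
            rintro rfl
            simp only at h2
            omega
        rw [heq]
        exact hrow i (by rw [Finset.mem_Icc]; omega)
      · -- card
        rw [Finset.card_image_of_injOn hinj, Finset.card_erase_of_mem hm1, hcard]
    · -- backward membership
      intro M' hM'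
      simp only [Finset.mem_coe, Finset.mem_filter, Finset.mem_powerset] at hM'
      obtain ⟨hsub, hcol, hrow, hcard⟩ := hM'
      have hbox' : ∀ p ∈ M', 1 ≤ p.1 ∧ p.1 ≤ m - 1 ∧ 1 ≤ p.2 ∧ p.2 ≤ a 1 - 1 ∧
          p.2 ≤ a p.1 - 1 := by
        intro p hp
        exact (memboxes (m - 1) (fun i => a i - 1) p).1 (hsub hp)
      have hginj : Function.Injective (fun p : ℕ × ℕ => (p.1, p.2 + 1)) := by
        intro p q hpq
        simp only [Prod.mk.injEq] at hpq
        obtain ⟨p1, p2⟩ := p; obtain ⟨q1, q2⟩ := q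
        simp only [Prod.mk.injEq, true_and]
        simp only at hpq
        omega
      have hnotin : ((m : ℕ), (1 : ℕ)) ∉ M'.image (fun p => (p.1, p.2 + 1)) := by
        rw [Finset.mem_image]
        rintro ⟨p, hp, hpe⟩
        have := hbox' p hp
        simp only [Prod.mk.injEq] at hpe
        omega
      simp only [Finset.mem_coe, Finset.mem_filter, Finset.mem_powerset]
      refine ⟨?_, ?_, ?_, ?_⟩
      · -- subset of boxes
        intro q hq
        rw [Finset.mem_insert] at hq
        rcases hq with rfl | hq
        · rw [memboxes]
          show 1 ≤ m ∧ m ≤ m ∧ 1 ≤ 1 ∧ 1 ≤ a 1 ∧ 1 ≤ a m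
          omega
        · rw [Finset.mem_image] at hq
          obtain ⟨p, hp, rfl⟩ := hq
          have h1 := hbox' p hp
          rw [memboxes]
          show 1 ≤ p.1 ∧ p.1 ≤ m ∧ 1 ≤ p.2 + 1 ∧ p.2 + 1 ≤ a 1 ∧ p.2 + 1 ≤ a p.1
          omega
      · -- columns
        intro j hj
        rw [Finset.mem_Icc] at hj
        rw [Finset.filter_insert]
        by_cases h1 : j = 1
        · subst h1
          rw [if_pos rfl]
          have hempty : (M'.image (fun p : ℕ × ℕ => (p.1, p.2 + 1))).filter
              (fun p => p.2 = 1) = ∅ := by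
            rw [Finset.filter_eq_empty_iff]
            intro q hq
            rw [Finset.mem_image] at hq
            obtain ⟨p, hp, rfl⟩ := hq
            have h2 := hbox' p hp
            show ¬(p.2 + 1 = 1)
            omega
          rw [hempty]
          simp
        · rw [if_neg (show ¬((1 : ℕ) = j) by omega)]
          rw [Finset.filter_image]
          rw [Finset.card_image_of_injective _ hginj]
          have hss : M'.filter (fun p : ℕ × ℕ => (p.1, p.2 + 1).2 = j) ⊆
              M'.filter (fun p => p.2 = j - 1) := by
            intro p hp
            rw [Finset.mem_filter] at hp ⊢
            have h2 : p.2 + 1 = j := hp.2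
            exact ⟨hp.1, by omega⟩
          have h3 := Finset.card_le_card hss
          have h4 : (M'.filter (fun p : ℕ × ℕ => p.2 = j - 1)).card ≤ 1 := by
            by_cases h5 : j - 1 ≤ a 1 - 1
            · exact hcol (j - 1) (by rw [Finset.mem_Icc]; omega)
            · have : M'.filter (fun p : ℕ × ℕ => p.2 = j - 1) = ∅ := by
                rw [Finset.filter_eq_empty_iff]
                intro p hp
                have := hbox' p hp
                show ¬(p.2 = j - 1)
                omega
              rw [this, Finset.card_empty]
              omega
          omega
      · -- rows
        intro i hi
        rw [Finset.mem_Icc] at hi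
        rw [Finset.filter_insert]
        by_cases h1 : i = m
        · rw [if_pos (show (m : ℕ) = i from h1.symm)]
          have hempty : (M'.image (fun p : ℕ × ℕ => (p.1, p.2 + 1))).filter
              (fun p => p.1 = i) = ∅ := by
            rw [Finset.filter_eq_empty_iff]
            intro q hq
            rw [Finset.mem_image] at hq
            obtain ⟨p, hp, rfl⟩ := hq
            have := hbox' p hp
            show ¬(p.1 = i)
            omega
          rw [hempty, h1]
          simp [hεm]
        · rw [if_neg (show ¬((m : ℕ) = i) by omega)]
          rw [Finset.filter_image]
          rw [Finset.card_image_of_injective _ hginj]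
          have heq : M'.filter (fun p : ℕ × ℕ => (p.1, p.2 + 1).1 = i) =
              M'.filter (fun p : ℕ × ℕ => p.1 = i) := by
            apply Finset.filter_congr
            intro p _
            exact Iff.rfl
          rw [heq]
          exact hrow i (by rw [Finset.mem_Icc]; omega)
      · -- card
        rw [Finset.card_insert_of_notMem hnotin,
          Finset.card_image_of_injective _ hginj, hcard]
        omega
    · -- left inverse
      intro M hM
      simp only [Finset.mem_coe, Finset.mem_filter, Finset.mem_powerset] at hM
      obtain ⟨hsub, hcol, hrow, hcard⟩ := hM
      obtain ⟨hm1, hrest⟩ := corner M hsub hcol hrow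
      beta_reduce
      rw [Finset.image_image]
      have himid : (M.erase (m, 1)).image
          ((fun p : ℕ × ℕ => (p.1, p.2 + 1)) ∘ (fun p : ℕ × ℕ => (p.1, p.2 - 1))) =
          M.erase (m, 1) := by
        rw [Finset.image_congr (g := id) (by
          intro p hp
          rw [Finset.mem_coe, Finset.mem_erase] at hp
          have h1 := hrest p hp.2 hp.1
          obtain ⟨p1, p2⟩ := p
          have h2 : 2 ≤ p2 := h1.1
          show ((p1 : ℕ), p2 - 1 + 1) = id (p1, p2)
          rw [id_eq]
          simp only [Prod.mk.injEq, true_and]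
          omega)]
        exact Finset.image_id
      rw [himid, Finset.insert_erase hm1]
    · -- right inverse
      intro M' hM'
      simp only [Finset.mem_coe, Finset.mem_filter, Finset.mem_powerset] at hM'
      obtain ⟨hsub, hcol, hrow, hcard⟩ := hM'
      have hbox' : ∀ p ∈ M', p.1 ≤ m - 1 := by
        intro p hp
        exact ((memboxes (m - 1) (fun i => a i - 1) p).1 (hsub hp)).2.1
      have hnotin : ((m : ℕ), (1 : ℕ)) ∉ M'.image (fun p => (p.1, p.2 + 1)) := by
        rw [Finset.mem_image]
        rintro ⟨p, hp, hpe⟩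
        have := hbox' p hp
        simp only [Prod.mk.injEq] at hpe
        omega
      beta_reduce
      rw [Finset.erase_insert hnotin, Finset.image_image]
      rw [Finset.image_congr (g := id) (by
        intro p _
        obtain ⟨p1, p2⟩ := p
        show ((p1 : ℕ), p2 + 1 - 1) = id (p1, p2)
        rw [id_eq]
        simp)]
      exact Finset.image_id
  · -- g(a, ε, 0) = 0
    unfold gYD
    rw [Finset.card_eq_zero, Finset.filter_eq_empty_iff]
    intro M hM
    rw [Finset.mem_powerset] at hM
    rintro ⟨hcol, hrow, hcard⟩
    have := (corner M hM hcol hrow).1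
    rw [Finset.card_eq_zero] at hcard
    rw [hcard] at this
    exact absurd this (Finset.notMem_empty _)

end ChordExpansion
end

section
/- Let a = (a_1, …, a_m) be a strictly decreasing partition with a_m ≥ 2, let ε ∈ {0,1}^m, and let k ≥ 0. Then g(a, ε, k) = g(a¹, ε, k) + g(a², ε², k−1), where a¹ = (a_1, …, a_{m−1}, a_m − 1), a² = (a_1 − 1, a_2 − 1, …, a_m − 1), ε² = (ε_1, …, ε_{m−1}, 1 − ε_m), and the second summand is interpreted as 0 when k = 0. -/
namespace ChordExpansion

private lemma anti_of (m : ℕ) (a : ℕ → ℕ)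
    (ha : ∀ i, 1 ≤ i → i + 1 ≤ m → a (i + 1) < a i) :
    ∀ j i, 1 ≤ i → i ≤ j → j ≤ m → a j ≤ a i := by
  intro j
  induction j with
  | zero => intro i h1 h2 _; omega
  | succ n ih =>
    intro i h1 h2 h3
    rcases Nat.eq_or_lt_of_le h2 with h | h
    · rw [h]
    · have h4 := ih i h1 (by omega) (by omega)
      have h5 := ha n (by omega) h3
      omega

/-- Shift a box one column to the left if it lies in a column `≥ b`. -/
def shrinkB (b : ℕ) (p : ℕ × ℕ) : ℕ × ℕ := (p.1, if p.2 < b then p.2 else p.2 - 1)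

/-- Shift a box one column to the right if it lies in a column `≥ b`. -/
def growB (b : ℕ) (p : ℕ × ℕ) : ℕ × ℕ := (p.1, if p.2 < b then p.2 else p.2 + 1)

private lemma rowcount (f : ℕ × ℕ → ℕ × ℕ) (hf : ∀ p, (f p).1 = p.1)
    (s : Finset (ℕ × ℕ)) (hs : Set.InjOn f s) (i : ℕ) :
    ((s.image f).filter fun p => p.1 = i).card = (s.filter fun p => p.1 = i).card := by
  rw [Finset.filter_image,
    Finset.card_image_of_injOn (hs.mono (Finset.coe_subset.mpr (Finset.filter_subset _ _)))]
  congr 1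
  apply Finset.filter_congr
  intro x _
  rw [hf]

/-- **Case 2 of the proof of Theorem 1.** If `a m ≥ 2`, then
`g(a, ε, k) = g(a¹, ε, k) + g(a², ε², k - 1)`, where `a¹ = (a 1, …, a (m-1), a m - 1)`,
`a² = (a 1 - 1, …, a m - 1)`, `ε² = (ε 1, …, ε (m-1), 1 - ε m)`, and the second summand
is interpreted as `0` when `k = 0`. -/
theorem g_recurrence (m : ℕ) (hm : 1 ≤ m) (a ε : ℕ → ℕ)
    (ha : ∀ i, 1 ≤ i → i + 1 ≤ m → a (i + 1) < a i) (ham : 2 ≤ a m)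
    (hε : ∀ i ∈ Finset.Icc 1 m, ε i = 0 ∨ ε i = 1) (k : ℕ) :
    gYD m a ε k =
      gYD m (fun i => if i = m then a m - 1 else a i) ε k +
        if k = 0 then 0
        else gYD m (fun i => a i - 1) (fun i => if i = m then 1 - ε m else ε i) (k - 1) := by
  have amono : ∀ i, 1 ≤ i → i ≤ m → a m ≤ a i := fun i h1 h2 => anti_of m a ha m i h1 h2 le_rfl
  have ha1 : a m ≤ a 1 := amono 1 le_rfl hm
  -- the Young diagram of `a¹` is that of `a` minus the corner box `(m, a m)`
  have hbox1 : boxes m (fun i => if i = m then a m - 1 else a i)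
      = (boxes m a).erase (m, a m) := by
    ext ⟨i, j⟩
    simp only [boxes, Finset.mem_erase, Finset.mem_filter, Finset.mem_product,
      Finset.mem_Icc, Prod.mk.injEq, not_and, ne_eq]
    constructor
    · rintro ⟨⟨⟨hi1, hi2⟩, hj1, hj2⟩, hj3⟩
      by_cases him : i = m
      · subst i
        rw [if_pos rfl] at hj3
        refine ⟨fun _ => by omega, ⟨⟨hi1, hi2⟩, hj1, ?_⟩, by omega⟩
        split_ifs at hj2 <;> omega
      · rw [if_neg him] at hj3
        refine ⟨fun h => absurd h him, ⟨⟨hi1, hi2⟩, hj1, ?_⟩, hj3⟩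
        split_ifs at hj2 <;> omega
    · rintro ⟨hne, ⟨⟨hi1, hi2⟩, hj1, hj2⟩, hj3⟩
      by_cases him : i = m
      · subst i
        have hja : j ≠ a m := hne rfl
        refine ⟨⟨⟨hi1, hi2⟩, hj1, ?_⟩, by rw [if_pos rfl]; omega⟩
        split_ifs <;> omega
      · refine ⟨⟨⟨hi1, hi2⟩, hj1, ?_⟩, by rw [if_neg him]; exact hj3⟩
        split_ifs with h1 <;> omega
  have hcle : (if (1:ℕ) = m then a m - 1 else a 1) ≤ a 1 := by split_ifs <;> omega
  have hcmem : ∀ (M : Finset (ℕ × ℕ)), M ⊆ (boxes m a).erase (m, a m) →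
      ∀ p ∈ M, p.2 ≤ (if (1:ℕ) = m then a m - 1 else a 1) := by
    intro M hMs p hp
    have h1 := hMs hp
    have h3 := Finset.ne_of_mem_erase h1
    have h2 := Finset.mem_of_mem_erase h1
    simp only [boxes, Finset.mem_filter, Finset.mem_product, Finset.mem_Icc] at h2
    obtain ⟨⟨⟨hi1, hi2⟩, hj1, hj2⟩, hj3⟩ := h2
    split_ifs with h
    · have hp1 : p.1 = m := by omega
      have hpa : p.2 ≠ a m := fun hc => h3 (Prod.ext_iff.mpr ⟨hp1, hc⟩)
      rw [hp1] at hj3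
      omega
    · exact hj2
  have hmbox : (m, a m) ∈ boxes m a := by
    simp only [boxes, Finset.mem_filter, Finset.mem_product, Finset.mem_Icc]
    exact ⟨⟨⟨hm, le_rfl⟩, by omega, ha1⟩, le_rfl⟩
  rw [gYD, ← Finset.card_filter_add_card_filter_not (p := fun M => (m, a m) ∈ M),
    Nat.add_comm]
  congr 1
  · -- corner box not used: these are exactly the diagrams of shape `a¹`
    rw [gYD]
    congr 1
    ext M
    simp only [Finset.mem_filter, Finset.mem_powerset]
    constructor
    · rintro ⟨⟨hsub, hc1, hc2, hc3⟩, hnm⟩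
      refine ⟨?_, ?_, hc2, hc3⟩
      · rw [hbox1]
        exact Finset.subset_erase.mpr ⟨hsub, hnm⟩
      · intro j hj
        exact hc1 j (Finset.mem_Icc.mpr ⟨(Finset.mem_Icc.mp hj).1,
          le_trans (Finset.mem_Icc.mp hj).2 hcle⟩)
    · rintro ⟨hsub', hc1', hc2, hc3⟩
      rw [hbox1] at hsub'
      obtain ⟨hsub, hnm⟩ := Finset.subset_erase.mp hsub'
      refine ⟨⟨hsub, ?_, hc2, hc3⟩, hnm⟩
      intro j hj
      obtain ⟨hj1, hj2⟩ := Finset.mem_Icc.mp hj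
      by_cases hjc : j ≤ (if (1:ℕ) = m then a m - 1 else a 1)
      · exact hc1' j (Finset.mem_Icc.mpr ⟨hj1, hjc⟩)
      · have hemp : M.filter (fun p => p.2 = j) = ∅ := by
          rw [Finset.filter_eq_empty_iff]
          intro p hp hpj
          have := hcmem M hsub' p hp
          omega
        simp [hemp]
  · -- corner box used: shift all columns `> a m` one step left
    rcases Nat.eq_zero_or_pos k with hk0 | hkpos
    · subst hk0
      rw [if_pos rfl, Finset.card_eq_zero, Finset.filter_eq_empty_iff]
      intro M hM hmem
      simp only [Finset.mem_filter, Finset.mem_powerset] at hM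
      have hc : M = ∅ := Finset.card_eq_zero.mp hM.2.2.2
      subst hc
      exact absurd hmem (Finset.notMem_empty _)
    rw [if_neg (by omega), gYD]
    refine Finset.card_bij' (fun M _ => (M.erase (m, a m)).image (shrinkB (a m)))
      (fun M _ => insert (m, a m) (M.image (growB (a m)))) ?_ ?_ ?_ ?_
    · -- the forward map lands in the diagrams of shape `a²`
      intro M hM
      simp only [Finset.mem_filter, Finset.mem_powerset] at hM
      obtain ⟨⟨hsub, hcol, hrow, hcard⟩, hmem⟩ := hM
      have hun : ∀ p ∈ M, p.2 = a m → p = (m, a m) := by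
        intro p hp hp2
        have h1 : (M.filter fun p => p.2 = a m).card ≤ 1 :=
          hcol (a m) (Finset.mem_Icc.mpr ⟨by omega, ha1⟩)
        exact Finset.card_le_one.mp h1 p (Finset.mem_filter.mpr ⟨hp, hp2⟩)
          (m, a m) (Finset.mem_filter.mpr ⟨hmem, rfl⟩)
      have hnob : ∀ p ∈ M.erase (m, a m), p.2 ≠ a m := by
        intro p hp hpb
        exact (Finset.ne_of_mem_erase hp) (hun p (Finset.mem_of_mem_erase hp) hpb)
      have hinj : Set.InjOn (shrinkB (a m)) (M.erase (m, a m)) := by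
        intro p hp q hq hpq
        have hp' := hnob p (Finset.mem_coe.mp hp)
        have hq' := hnob q (Finset.mem_coe.mp hq)
        have h1 := congrArg Prod.fst hpq
        have h2 := congrArg Prod.snd hpq
        simp only [shrinkB] at h1 h2
        exact Prod.ext_iff.mpr ⟨h1, by split_ifs at h2 <;> omega⟩
      refine Finset.mem_filter.mpr ⟨Finset.mem_powerset.mpr ?_, ?_, ?_, ?_⟩
      · intro x hx
        obtain ⟨p, hp, rfl⟩ := Finset.mem_image.mp hx
        have hpM := Finset.mem_of_mem_erase hp
        have hpnb := hnob p hp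
        have hpb := hsub hpM
        simp only [boxes, Finset.mem_filter, Finset.mem_product, Finset.mem_Icc] at hpb ⊢
        obtain ⟨⟨⟨h1, h2⟩, h3, h4⟩, h5⟩ := hpb
        have h6 := amono p.1 h1 h2
        simp only [shrinkB]
        refine ⟨⟨⟨h1, h2⟩, ?_, ?_⟩, ?_⟩ <;> split_ifs <;> omega
      · intro j hj
        have hj' : 1 ≤ j ∧ j ≤ a 1 - 1 := Finset.mem_Icc.mp hj
        rw [Finset.filter_image,
          Finset.card_image_of_injOn (hinj.mono (Finset.coe_subset.mpr
            (Finset.filter_subset _ _)))]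
        have hsubf : (M.erase (m, a m)).filter (fun p => (shrinkB (a m) p).2 = j)
            ⊆ M.filter fun p => p.2 = (if j < a m then j else j + 1) := by
          intro p hp
          obtain ⟨hp1, hp2⟩ := Finset.mem_filter.mp hp
          have h2 := hnob p hp1
          have h3 := Finset.mem_of_mem_erase hp1
          refine Finset.mem_filter.mpr ⟨h3, ?_⟩
          have h4 : (if p.2 < a m then p.2 else p.2 - 1) = j := hp2
          split_ifs at h4 ⊢ <;> omega
        refine le_trans (Finset.card_le_card hsubf) (hcol _ (Finset.mem_Icc.mpr ?_))
        constructor <;> split_ifs <;> omega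
      · intro i hi
        rw [rowcount (shrinkB (a m)) (fun p => rfl) _ hinj i, Finset.filter_erase]
        by_cases him : i = m
        · subst i
          have hmemf : (m, a m) ∈ M.filter fun p => p.1 = m :=
            Finset.mem_filter.mpr ⟨hmem, rfl⟩
          rw [Finset.card_erase_of_mem hmemf]
          have h1 := hrow m (Finset.mem_Icc.mpr ⟨hm, le_rfl⟩)
          have h3 : 1 ≤ (M.filter fun p => p.1 = m).card :=
            Finset.card_pos.mpr ⟨_, hmemf⟩
          have h4 := hε m (Finset.mem_Icc.mpr ⟨hm, le_rfl⟩)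
          have hgoal : ((M.filter fun p => p.1 = m).card - 1) % 2 = (1 - ε m) % 2 := by
            rcases h4 with h4 | h4 <;> omega
          simpa using hgoal
        · have hnm : (m, a m) ∉ M.filter fun p => p.1 = i := fun h =>
            him ((Finset.mem_filter.mp h).2.symm)
          rw [Finset.erase_eq_of_notMem hnm]
          simpa [him] using hrow i hi
      · rw [Finset.card_image_of_injOn hinj, Finset.card_erase_of_mem hmem]
        omega
    · -- the reverse map lands in the diagrams of shape `a` containing the corner box
      intro M hM
      simp only [Finset.mem_filter, Finset.mem_powerset] at hM
      obtain ⟨hsub, hcol, hrow, hcard⟩ := hM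
      have hni : (m, a m) ∉ M.image (growB (a m)) := by
        intro h
        obtain ⟨p, hp, hpe⟩ := Finset.mem_image.mp h
        have h2 := congrArg Prod.snd hpe
        simp only [growB] at h2
        split_ifs at h2 <;> omega
      have hginj : Set.InjOn (growB (a m)) M := by
        intro p hp q hq hpq
        have h1 := congrArg Prod.fst hpq
        have h2 := congrArg Prod.snd hpq
        simp only [growB] at h1 h2
        exact Prod.ext_iff.mpr ⟨h1, by split_ifs at h2 <;> omega⟩
      refine Finset.mem_filter.mpr ⟨Finset.mem_filter.mpr
        ⟨Finset.mem_powerset.mpr ?_, ?_, ?_, ?_⟩, Finset.mem_insert_self _ _⟩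
      · intro x hx
        rcases Finset.mem_insert.mp hx with rfl | hx
        · exact hmbox
        · obtain ⟨p, hp, rfl⟩ := Finset.mem_image.mp hx
          have hpb := hsub hp
          simp only [boxes, Finset.mem_filter, Finset.mem_product, Finset.mem_Icc] at hpb ⊢
          obtain ⟨⟨⟨h1, h2⟩, h3, h4⟩, h5⟩ := hpb
          have h6 := amono p.1 h1 h2
          simp only [growB]
          refine ⟨⟨⟨h1, h2⟩, ?_, ?_⟩, ?_⟩ <;> split_ifs <;> omega
      · intro j hj
        obtain ⟨hj1, hj2⟩ := Finset.mem_Icc.mp hj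
        rw [Finset.filter_insert]
        by_cases hjb : j = a m
        · subst hjb
          have hcc : (m, a m).2 = a m := rfl
          rw [if_pos hcc]
          have hemp : (M.image (growB (a m))).filter (fun p => p.2 = a m) = ∅ := by
            rw [Finset.filter_eq_empty_iff]
            intro x hx
            obtain ⟨p, hp, rfl⟩ := Finset.mem_image.mp hx
            simp only [growB]
            split_ifs <;> omega
          rw [hemp]
          simp
        · have hcc : ¬ ((m, a m).2 = j) := fun h => hjb h.symm
          rw [if_neg hcc, Finset.filter_image,
            Finset.card_image_of_injOn (hginj.mono (Finset.coe_subset.mpr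
              (Finset.filter_subset _ _)))]
          have hsubf : M.filter (fun p => (growB (a m) p).2 = j)
              ⊆ M.filter fun p => p.2 = (if j < a m then j else j - 1) := by
            intro p hp
            obtain ⟨hpM, hp2⟩ := Finset.mem_filter.mp hp
            have hp2' : (if p.2 < a m then p.2 else p.2 + 1) = j := hp2
            refine Finset.mem_filter.mpr ⟨hpM, ?_⟩
            split_ifs at hp2' ⊢ <;> omega
          refine le_trans (Finset.card_le_card hsubf) (hcol _ ?_)
          have hmemI : (if j < a m then j else j - 1) ∈ Finset.Icc 1 (a 1 - 1) :=
            Finset.mem_Icc.mpr (by constructor <;> split_ifs <;> omega)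
          exact hmemI
      · intro i hi
        rw [Finset.filter_insert]
        by_cases him : i = m
        · subst i
          have hcc : (m, a m).1 = m := rfl
          rw [if_pos hcc,
            Finset.card_insert_of_notMem (fun h => hni (Finset.mem_of_mem_filter _ h)),
            rowcount (growB (a m)) (fun p => rfl) _ hginj m]
          have h1 : (M.filter fun p => p.1 = m).card % 2 = (1 - ε m) % 2 := by
            simpa using hrow m (Finset.mem_Icc.mpr ⟨hm, le_rfl⟩)
          have h4 := hε m (Finset.mem_Icc.mpr ⟨hm, le_rfl⟩)
          have hgoal : ((M.filter fun p => p.1 = m).card + 1) % 2 = ε m % 2 := by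
            rcases h4 with h4 | h4 <;> omega
          exact hgoal
        · have hcc : ¬ ((m, a m).1 = i) := fun h => him h.symm
          rw [if_neg hcc, rowcount (growB (a m)) (fun p => rfl) _ hginj i]
          simpa [him] using hrow i hi
      · rw [Finset.card_insert_of_notMem hni, Finset.card_image_of_injOn hginj]
        omega
    · -- left inverse
      intro M hM
      simp only [Finset.mem_filter, Finset.mem_powerset] at hM
      obtain ⟨⟨hsub, hcol, hrow, hcard⟩, hmem⟩ := hM
      have hun : ∀ p ∈ M, p.2 = a m → p = (m, a m) := by
        intro p hp hp2
        have h1 : (M.filter fun p => p.2 = a m).card ≤ 1 :=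
          hcol (a m) (Finset.mem_Icc.mpr ⟨by omega, ha1⟩)
        exact Finset.card_le_one.mp h1 p (Finset.mem_filter.mpr ⟨hp, hp2⟩)
          (m, a m) (Finset.mem_filter.mpr ⟨hmem, rfl⟩)
      have hnob : ∀ p ∈ M.erase (m, a m), p.2 ≠ a m := by
        intro p hp hpb
        exact (Finset.ne_of_mem_erase hp) (hun p (Finset.mem_of_mem_erase hp) hpb)
      show insert (m, a m) (((M.erase (m, a m)).image (shrinkB (a m))).image (growB (a m))) = M
      rw [Finset.image_image]
      have himg : (M.erase (m, a m)).image (growB (a m) ∘ shrinkB (a m))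
          = M.erase (m, a m) := by
        have heq : ∀ p ∈ M.erase (m, a m), (growB (a m) ∘ shrinkB (a m)) p = id p := by
          intro p hp
          have h2 := hnob p hp
          obtain ⟨x, y⟩ := p
          have hy : y ≠ a m := h2
          simp only [Function.comp, growB, shrinkB, id_eq]
          have hval : (if (if y < a m then y else y - 1) < a m
              then (if y < a m then y else y - 1)
              else (if y < a m then y else y - 1) + 1) = y := by
            split_ifs <;> omega
          rw [hval]
        rw [Finset.image_congr (fun x hx => heq x (Finset.mem_coe.mp hx)), Finset.image_id]
      rw [himg, Finset.insert_erase hmem]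
    · -- right inverse
      intro M hM
      simp only [Finset.mem_filter, Finset.mem_powerset] at hM
      obtain ⟨hsub, hcol, hrow, hcard⟩ := hM
      have hni : (m, a m) ∉ M.image (growB (a m)) := by
        intro h
        obtain ⟨p, hp, hpe⟩ := Finset.mem_image.mp h
        have h2 := congrArg Prod.snd hpe
        simp only [growB] at h2
        split_ifs at h2 <;> omega
      show ((insert (m, a m) (M.image (growB (a m)))).erase (m, a m)).image (shrinkB (a m)) = M
      rw [Finset.erase_insert hni, Finset.image_image]
      have heq : ∀ p ∈ M, (shrinkB (a m) ∘ growB (a m)) p = id p := by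
        intro p hp
        obtain ⟨x, y⟩ := p
        simp only [Function.comp, growB, shrinkB, id_eq]
        have hval : (if (if y < a m then y else y + 1) < a m
            then (if y < a m then y else y + 1)
            else (if y < a m then y else y + 1) - 1) = y := by
          split_ifs <;> omega
        rw [hval]
      rw [Finset.image_congr (fun x hx => heq x (Finset.mem_coe.mp hx)), Finset.image_id]

end ChordExpansion
end

section
/- For n ≥ 1, the number of even increasing trees of order n+2 equals the number of 0-1 Young diagrams M of shape (n, n−1, …, 1) such that every column of M contains at most one 1 and every row of M contains an even number of 1's. An explicit bijection φ sends a tree T (with vertex set {0,1,…,n+1}) to the 0-1 Young diagram φ(T) whose box (i, n+2−j) has value 1 if and only if (i,j) is an edge of T with 1 ≤ i < j ≤ n+1, all other boxes having value 0. -/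
namespace ChordExpansion

/-- `T` (a set of edges `(parent, child)`) is an even increasing tree of order `n + 2`:
a rooted directed tree on `{0, 1, …, n+1}` whose labels increase along edges (so along
all paths from the root `0`), every vertex `j ∈ {1, …, n+1}` having exactly one incoming
edge, and every vertex `k ≠ 0` having even outdegree. -/
def IsEvenIncTree (n : ℕ) (T : Finset (ℕ × ℕ)) : Prop :=
  (∀ e ∈ T, e.1 < e.2 ∧ e.2 ≤ n + 1) ∧
  (∀ j ∈ Finset.Icc 1 (n + 1), (T.filter fun e => e.2 = j).card = 1) ∧
  (∀ k ∈ Finset.Icc 1 (n + 1), (T.filter fun e => e.1 = k).card % 2 = 0)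

instance (n : ℕ) : DecidablePred (IsEvenIncTree n) := fun T => by
  unfold IsEvenIncTree; infer_instance

/-- The even increasing trees of order `n + 2`, encoded by their edge sets. -/
def evenIncTrees (n : ℕ) : Finset (Finset (ℕ × ℕ)) :=
  (Finset.Icc 0 (n + 1) ×ˢ Finset.Icc 1 (n + 1)).powerset.filter (IsEvenIncTree n)

/-- `M` (a set of boxes) is a 0-1 Young diagram of staircase shape `(n, n-1, …, 1)`
(encoded by its set of `1`-boxes) in which every column has at most one `1` and every row
has an even number of `1`'s. -/
def IsGoodStaircaseYD (n : ℕ) (M : Finset (ℕ × ℕ)) : Prop :=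
  M ⊆ boxes n (fun i => n + 1 - i) ∧
  (∀ j ∈ Finset.Icc 1 n, (M.filter fun p => p.2 = j).card ≤ 1) ∧
  (∀ i ∈ Finset.Icc 1 n, (M.filter fun p => p.1 = i).card % 2 = 0)

instance (n : ℕ) : DecidablePred (IsGoodStaircaseYD n) := fun M => by
  unfold IsGoodStaircaseYD; infer_instance

/-- The 0-1 Young diagrams of staircase shape `(n, n-1, …, 1)` in which every column has
at most one `1` and every row has an even number of `1`'s. -/
def staircaseYDs (n : ℕ) : Finset (Finset (ℕ × ℕ)) :=
  (boxes n (fun i => n + 1 - i)).powerset.filter (IsGoodStaircaseYD n)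

/-- The map `φ`: the box `(i, n + 2 - j)` of `φ T` has value `1` iff `(i, j)` is an edge
of `T` with `1 ≤ i < j ≤ n + 1` (edges out of the root `0` are discarded). -/
def phi (n : ℕ) (T : Finset (ℕ × ℕ)) : Finset (ℕ × ℕ) :=
  (T.filter fun e => 1 ≤ e.1).image fun e => (e.1, n + 2 - e.2)

lemma mem_stairbox {n : ℕ} {p : ℕ × ℕ} :
    p ∈ boxes n (fun i => n + 1 - i) ↔ 1 ≤ p.1 ∧ 1 ≤ p.2 ∧ p.1 + p.2 ≤ n + 1 := by
  simp only [boxes, Finset.mem_filter, Finset.mem_product, Finset.mem_Icc]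
  omega

lemma mem_phi {n : ℕ} {T : Finset (ℕ × ℕ)} {p : ℕ × ℕ} :
    p ∈ phi n T ↔ ∃ e ∈ T, 1 ≤ e.1 ∧ e.1 = p.1 ∧ n + 2 - e.2 = p.2 := by
  simp only [phi, Finset.mem_image, Finset.mem_filter, Prod.ext_iff]
  tauto

/-- Inverse map to `phi`. -/
def psi (n : ℕ) (M : Finset (ℕ × ℕ)) : Finset (ℕ × ℕ) :=
  (Finset.Icc 0 (n + 1) ×ˢ Finset.Icc 1 (n + 1)).filter fun e =>
    (1 ≤ e.1 ∧ (e.1, n + 2 - e.2) ∈ M) ∨ (e.1 = 0 ∧ ∀ p ∈ M, p.2 ≠ n + 2 - e.2)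

lemma mem_psi {n : ℕ} {M : Finset (ℕ × ℕ)} {e : ℕ × ℕ} :
    e ∈ psi n M ↔ (e.1 ≤ n + 1 ∧ 1 ≤ e.2 ∧ e.2 ≤ n + 1) ∧
      ((1 ≤ e.1 ∧ (e.1, n + 2 - e.2) ∈ M) ∨ (e.1 = 0 ∧ ∀ p ∈ M, p.2 ≠ n + 2 - e.2)) := by
  simp only [psi, Finset.mem_filter, Finset.mem_product, Finset.mem_Icc]
  simp [Nat.zero_le]

lemma phi_mem {n : ℕ} {T : Finset (ℕ × ℕ)} (hT : IsEvenIncTree n T) :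
    IsGoodStaircaseYD n (phi n T) := by
  obtain ⟨h1, h2, h3⟩ := hT
  refine ⟨?_, ?_, ?_⟩
  · intro p hp
    rw [mem_phi] at hp
    obtain ⟨e, he, h1e, hpe1, hpe2⟩ := hp
    have := h1 e he
    rw [mem_stairbox]
    omega
  · intro c hc
    rw [Finset.mem_Icc] at hc
    have hsub : (phi n T).filter (fun p => p.2 = c) ⊆
        (T.filter fun e => e.2 = n + 2 - c).image fun e => (e.1, n + 2 - e.2) := by
      intro p hp
      rw [Finset.mem_filter, mem_phi] at hp
      obtain ⟨⟨e, he, h1e, hp1, hp2⟩, hpc⟩ := hp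
      have := h1 e he
      refine Finset.mem_image.2 ⟨e, Finset.mem_filter.2 ⟨he, by omega⟩, ?_⟩
      rw [Prod.ext_iff]
      exact ⟨hp1, hp2⟩
    calc ((phi n T).filter fun p => p.2 = c).card
        ≤ ((T.filter fun e => e.2 = n + 2 - c).image fun e => (e.1, n + 2 - e.2)).card :=
          Finset.card_le_card hsub
      _ ≤ (T.filter fun e => e.2 = n + 2 - c).card := Finset.card_image_le
      _ = 1 := h2 _ (Finset.mem_Icc.2 (by omega))
  · intro i hi
    rw [Finset.mem_Icc] at hi
    have heq : (phi n T).filter (fun p => p.1 = i) =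
        (T.filter fun e => e.1 = i).image fun e => (e.1, n + 2 - e.2) := by
      ext p
      rw [Finset.mem_filter, mem_phi, Finset.mem_image]
      constructor
      · rintro ⟨⟨e, he, h1e, hp1, hp2⟩, hpi⟩
        exact ⟨e, Finset.mem_filter.2 ⟨he, by omega⟩, Prod.ext_iff.2 ⟨hp1, hp2⟩⟩
      · rintro ⟨e, he, rfl⟩
        rw [Finset.mem_filter] at he
        exact ⟨⟨e, he.1, by omega, rfl, rfl⟩, he.2⟩
    have hinj : Set.InjOn (fun e : ℕ × ℕ => (e.1, n + 2 - e.2))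
        ↑(T.filter fun e => e.1 = i) := by
      intro a ha b hb hab
      rw [Finset.mem_coe, Finset.mem_filter] at ha hb
      have ha' := h1 a ha.1
      have hb' := h1 b hb.1
      rw [Prod.ext_iff] at hab
      simp only at hab
      rw [Prod.ext_iff]
      exact ⟨hab.1, by omega⟩
    rw [heq, Finset.card_image_of_injOn hinj]
    exact h3 i (Finset.mem_Icc.2 (by omega))

lemma psi_phi {n : ℕ} {T : Finset (ℕ × ℕ)} (hT : IsEvenIncTree n T) :
    psi n (phi n T) = T := by
  obtain ⟨h1, h2, h3⟩ := hT
  ext e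
  rw [mem_psi]
  constructor
  · rintro ⟨⟨he1, he2a, he2b⟩, h | h⟩
    · obtain ⟨h1e, hmem⟩ := h
      rw [mem_phi] at hmem
      obtain ⟨f, hf, h1f, hf1, hf2⟩ := hmem
      have hb := h1 f hf
      have hfe : f = e := by
        rw [Prod.ext_iff]
        simp only at hf1 hf2 ⊢
        omega
      rwa [← hfe]
    · obtain ⟨he0, hnone⟩ := h
      have h2e := h2 e.2 (Finset.mem_Icc.2 ⟨he2a, he2b⟩)
      obtain ⟨f, hf⟩ := Finset.card_eq_one.1 h2e
      have hfT : f ∈ T.filter (fun x => x.2 = e.2) := hf ▸ Finset.mem_singleton_self f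
      rw [Finset.mem_filter] at hfT
      obtain ⟨hfT, hfe⟩ := hfT
      have hb := h1 f hfT
      have hf1 : f.1 = 0 := by
        by_contra hne
        have hmem : (f.1, n + 2 - f.2) ∈ phi n T := mem_phi.2 ⟨f, hfT, by omega, rfl, rfl⟩
        exact hnone _ hmem (by simp only; omega)
      have hfe' : f = e := by rw [Prod.ext_iff]; omega
      rwa [← hfe']
  · intro heT
    have hb := h1 e heT
    refine ⟨⟨by omega, by omega, hb.2⟩, ?_⟩
    rcases Nat.eq_zero_or_pos e.1 with h0 | hpos
    · right
      refine ⟨h0, ?_⟩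
      intro p hp hcontra
      rw [mem_phi] at hp
      obtain ⟨f, hf, h1f, hp1, hp2⟩ := hp
      have hbf := h1 f hf
      have hfe2 : f.2 = e.2 := by omega
      have hfmem : f ∈ T.filter (fun x => x.2 = e.2) := Finset.mem_filter.2 ⟨hf, hfe2⟩
      have hemem : e ∈ T.filter (fun x => x.2 = e.2) := Finset.mem_filter.2 ⟨heT, rfl⟩
      have h2e := h2 e.2 (Finset.mem_Icc.2 ⟨by omega, hb.2⟩)
      have hfeq := Finset.card_le_one.1 (le_of_eq h2e) _ hfmem _ hemem
      rw [hfeq] at h1f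
      omega
    · left
      exact ⟨hpos, mem_phi.2 ⟨e, heT, hpos, rfl, rfl⟩⟩

lemma psi_mem {n : ℕ} {M : Finset (ℕ × ℕ)} (hM : IsGoodStaircaseYD n M) :
    IsEvenIncTree n (psi n M) := by
  obtain ⟨hsub, hcol, hrow⟩ := hM
  refine ⟨?_, ?_, ?_⟩
  · intro e he
    rw [mem_psi] at he
    obtain ⟨⟨_, he2a, he2b⟩, h | h⟩ := he
    · have := mem_stairbox.1 (hsub h.2)
      simp only at this
      exact ⟨by omega, he2b⟩
    · exact ⟨by omega, he2b⟩
  · intro j hj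
    rw [Finset.mem_Icc] at hj
    by_cases hcase : ∃ p ∈ M, p.2 = n + 2 - j
    · obtain ⟨p, hpM, hpj⟩ := hcase
      have hpb := mem_stairbox.1 (hsub hpM)
      have heq : (psi n M).filter (fun e => e.2 = j) = {(p.1, j)} := by
        ext e
        simp only [Finset.mem_filter, Finset.mem_singleton, mem_psi]
        constructor
        · rintro ⟨⟨hb, h | h⟩, he2⟩
          · have hmem : (e.1, n + 2 - e.2) ∈ M.filter (fun q => q.2 = n + 2 - j) :=
              Finset.mem_filter.2 ⟨h.2, by simp only; omega⟩
            have hpmem : p ∈ M.filter (fun q => q.2 = n + 2 - j) :=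
              Finset.mem_filter.2 ⟨hpM, hpj⟩
            have hone := hcol (n + 2 - j) (Finset.mem_Icc.2 ⟨by omega, by omega⟩)
            have heqp := Finset.card_le_one.1 hone _ hmem _ hpmem
            rw [Prod.ext_iff] at heqp
            simp only at heqp
            rw [Prod.ext_iff]
            exact ⟨heqp.1, he2⟩
          · exact absurd hpj (by have := h.2 p hpM; omega)
        · rintro rfl
          refine ⟨⟨⟨by omega, by omega, by omega⟩, Or.inl ⟨by omega, ?_⟩⟩, rfl⟩
          simp only
          have hpe : (p.1, n + 2 - j) = p := by rw [Prod.ext_iff]; exact ⟨rfl, hpj.symm⟩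
          rw [hpe]
          exact hpM
      rw [heq, Finset.card_singleton]
    · push_neg at hcase
      have heq : (psi n M).filter (fun e => e.2 = j) = {(0, j)} := by
        ext e
        simp only [Finset.mem_filter, Finset.mem_singleton, mem_psi]
        constructor
        · rintro ⟨⟨hb, h | h⟩, he2⟩
          · exact absurd (by simp only; omega : ((e.1, n + 2 - e.2) : ℕ × ℕ).2 = n + 2 - j)
              (hcase _ h.2)
          · rw [Prod.ext_iff]
            exact ⟨h.1, he2⟩
        · rintro rfl
          exact ⟨⟨⟨by omega, by omega, by omega⟩,
            Or.inr ⟨rfl, fun p hp => by have := hcase p hp; simp only; omega⟩⟩, rfl⟩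
      rw [heq, Finset.card_singleton]
  · intro k hk
    rw [Finset.mem_Icc] at hk
    rcases Nat.lt_or_ge n k with hkn | hkn
    · have heq : (psi n M).filter (fun e => e.1 = k) = ∅ := by
        rw [Finset.filter_eq_empty_iff]
        intro e he hek
        rw [mem_psi] at he
        obtain ⟨hb, h | h⟩ := he
        · have := mem_stairbox.1 (hsub h.2)
          simp only at this
          omega
        · omega
      rw [heq]
      simp
    · have heq : (psi n M).filter (fun e => e.1 = k) =
          (M.filter fun p => p.1 = k).image (fun p => (p.1, n + 2 - p.2)) := by
        ext e
        simp only [Finset.mem_filter, Finset.mem_image, mem_psi]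
        constructor
        · rintro ⟨⟨hb, h | h⟩, hek⟩
          · refine ⟨(e.1, n + 2 - e.2), ⟨h.2, hek⟩, ?_⟩
            have hrec2 : n + 2 - (n + 2 - e.2) = e.2 := by omega
            simp [Prod.ext_iff, hrec2]
          · omega
        · rintro ⟨p, hp, rfl⟩
          have hpb := mem_stairbox.1 (hsub hp.1)
          refine ⟨⟨⟨by omega, by omega, by omega⟩, Or.inl ⟨by omega, ?_⟩⟩, hp.2⟩
          simp only
          have hrec : n + 2 - (n + 2 - p.2) = p.2 := by omega
          rw [hrec]
          exact hp.1
      have hinj : Set.InjOn (fun p : ℕ × ℕ => (p.1, n + 2 - p.2))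
          ↑(M.filter fun p => p.1 = k) := by
        intro a ha b hb hab
        rw [Finset.mem_coe, Finset.mem_filter] at ha hb
        have ha' := mem_stairbox.1 (hsub ha.1)
        have hb' := mem_stairbox.1 (hsub hb.1)
        rw [Prod.ext_iff] at hab
        simp only at hab
        rw [Prod.ext_iff]
        exact ⟨hab.1, by omega⟩
      rw [heq, Finset.card_image_of_injOn hinj]
      exact hrow k (Finset.mem_Icc.2 ⟨hk.1, hkn⟩)

lemma phi_psi {n : ℕ} {M : Finset (ℕ × ℕ)} (hM : IsGoodStaircaseYD n M) :
    phi n (psi n M) = M := by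
  obtain ⟨hsub, -, -⟩ := hM
  ext p
  rw [mem_phi]
  constructor
  · rintro ⟨e, he, h1e, hp1, hp2⟩
    rw [mem_psi] at he
    obtain ⟨hb, h | h⟩ := he
    · have hmem := h.2
      have hpe : (e.1, n + 2 - e.2) = p := Prod.ext_iff.2 ⟨hp1, hp2⟩
      rwa [hpe] at hmem
    · omega
  · intro hpM
    have hpb := mem_stairbox.1 (hsub hpM)
    refine ⟨(p.1, n + 2 - p.2), ?_, by simp only; omega, rfl, by simp only; omega⟩
    rw [mem_psi]
    refine ⟨⟨by omega, by omega, by omega⟩, Or.inl ⟨by omega, ?_⟩⟩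
    simp only
    have hrec : n + 2 - (n + 2 - p.2) = p.2 := by omega
    rw [hrec, Prod.mk.eta]
    exact hpM

lemma mem_evenIncTrees {n : ℕ} {T : Finset (ℕ × ℕ)} :
    T ∈ evenIncTrees n ↔ IsEvenIncTree n T := by
  rw [evenIncTrees, Finset.mem_filter, Finset.mem_powerset, and_iff_right_iff_imp]
  intro hT e he
  have := hT.1 e he
  simp only [Finset.mem_product, Finset.mem_Icc]
  omega

lemma mem_staircaseYDs {n : ℕ} {M : Finset (ℕ × ℕ)} :
    M ∈ staircaseYDs n ↔ IsGoodStaircaseYD n M := by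
  rw [staircaseYDs, Finset.mem_filter, Finset.mem_powerset, and_iff_right_iff_imp]
  exact fun h => h.1

/-- **Remark after Corollary 3.** For `n ≥ 1`, the number of even increasing trees of
order `n + 2` equals the number of 0-1 Young diagrams of staircase shape `(n, n-1, …, 1)`
in which every column has at most one `1` and every row has an even number of `1`'s;
moreover `φ` is an explicit bijection between the two families. -/
theorem evenIncTrees_card_eq_staircaseYDs_card (n : ℕ) (hn : 1 ≤ n) :
    (evenIncTrees n).card = (staircaseYDs n).card ∧
      Set.BijOn (phi n) ↑(evenIncTrees n) ↑(staircaseYDs n) := by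
  have hmt : Set.MapsTo (phi n) ↑(evenIncTrees n) ↑(staircaseYDs n) := fun T hT => by
    rw [Finset.mem_coe, mem_staircaseYDs]
    exact phi_mem (mem_evenIncTrees.1 (Finset.mem_coe.1 hT))
  have hmt' : Set.MapsTo (psi n) ↑(staircaseYDs n) ↑(evenIncTrees n) := fun M hM => by
    rw [Finset.mem_coe, mem_evenIncTrees]
    exact psi_mem (mem_staircaseYDs.1 (Finset.mem_coe.1 hM))
  have hbij : Set.BijOn (phi n) ↑(evenIncTrees n) ↑(staircaseYDs n) :=
    Set.InvOn.bijOn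
      ⟨fun T hT => psi_phi (mem_evenIncTrees.1 (Finset.mem_coe.1 hT)),
       fun M hM => phi_psi (mem_staircaseYDs.1 (Finset.mem_coe.1 hM))⟩ hmt hmt'
  refine ⟨?_, hbij⟩
  exact Finset.card_bij (fun T _ => phi n T)
    (fun T hT => Finset.mem_coe.1 (hbij.mapsTo (Finset.mem_coe.2 hT)))
    (fun a ha b hb h => hbij.injOn (Finset.mem_coe.2 ha) (Finset.mem_coe.2 hb) h)
    (fun M hM => by
      obtain ⟨T, hT, hTM⟩ := hbij.surjOn (Finset.mem_coe.2 hM)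
      exact ⟨T, Finset.mem_coe.1 hT, hTM⟩)

end ChordExpansion
end
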